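/- The braided symmetriser equals the sum over the Matsumoto section: Σ_{π ∈ 𝕊_n} t(π) = [n]!_σ in ℂ𝔹_n, where t(π) = σ_{i_1}⋯σ_{i_l} for any reduced decomposition π = s_{i_1}⋯s_{i_l}. -/

import Mathlib

/-- The braid relations on the free group with generators `σ₀, …, σ_{n−1}`
(0-indexed): `σᵢσⱼσᵢ = σⱼσᵢσⱼ` for `j = i + 1` and `σᵢσⱼ = σⱼσᵢ` for `i + 2 ≤ j`. -/
def braidRels (n : ℕ) : Set (FreeGroup (Fin n)) :=
  {r | (∃ i j : Fin n, (j : ℕ) = (i : ℕ) + 1 ∧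
          r = FreeGroup.of i * FreeGroup.of j * FreeGroup.of i *
                (FreeGroup.of j * FreeGroup.of i * FreeGroup.of j)⁻¹) ∨
       (∃ i j : Fin n, (i : ℕ) + 2 ≤ (j : ℕ) ∧
          r = FreeGroup.of i * FreeGroup.of j *
                (FreeGroup.of j * FreeGroup.of i)⁻¹)}

/-- The braid group `𝔹_n` on `n` strands, with generators `σ₁, …, σ_{n−1}`
indexed by `Fin (n−1)`. -/
abbrev BraidGroup (n : ℕ) := PresentedGroup (braidRels (n - 1))

/-- The generator `σ_i` (1-indexed) of `𝔹_n`. -/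
noncomputable def sig (n : ℕ) (i : ℕ) : BraidGroup n :=
  if h : i - 1 < n - 1 then PresentedGroup.of (⟨i - 1, h⟩ : Fin (n - 1)) else 1

/-- The descending chain `σ_{s+j−1} σ_{s+j−2} ⋯ σ_s` (`j` factors). -/
noncomputable def sigChain (n s : ℕ) : ℕ → BraidGroup n
  | 0 => 1
  | j + 1 => sig n (s + j) * sigChain n s j

/-- The shifted braided integer `[k]_σ^{(s)}` in `ℂ𝔹_n`. -/
noncomputable def bint (n s k : ℕ) : MonoidAlgebra ℂ (BraidGroup n) :=
  ∑ j ∈ Finset.range k, MonoidAlgebra.of ℂ (BraidGroup n) (sigChain n s j)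

/-- The braided factorial `bfact n s k = [k]_σ^{(s)} [k−1]_σ^{(s+1)} ⋯
[2]_σ^{(s+k−2)}`; in particular `bfact n 1 n = [n]!_σ`. -/
noncomputable def bfact (n : ℕ) : ℕ → ℕ → MonoidAlgebra ℂ (BraidGroup n)
  | _, 0 => 1
  | s, k + 1 => bint n s (k + 1) * bfact n (s + 1) k

namespace Braid18

variable {n : ℕ}

def wp {n : ℕ} (l : List (Fin n)) : Equiv.Perm (Fin (n + 1)) :=
  (l.map fun i => Equiv.swap (Fin.castSucc i) (Fin.succ i)).prod

noncomputable def bp {n : ℕ} (l : List (Fin n)) : BraidGroup (n + 1) :=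
  (l.map fun i => (PresentedGroup.of i : BraidGroup (n + 1))).prod

def run (n s : ℕ) : ℕ → List (Fin n)
  | 0 => []
  | j + 1 => (if h : s + j < n then [(⟨s + j, h⟩ : Fin n)] else []) ++ run n s j

lemma wp_nil : wp ([] : List (Fin n)) = 1 := rfl

lemma wp_cons (i : Fin n) (l : List (Fin n)) :
    wp (i :: l) = Equiv.swap (Fin.castSucc i) (Fin.succ i) * wp l := by
  simp only [wp, List.map_cons, List.prod_cons]

lemma wp_append (l l' : List (Fin n)) : wp (l ++ l') = wp l * wp l' := by
  simp [wp]

lemma bp_append (l l' : List (Fin n)) : bp (l ++ l') = bp l * bp l' := by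
  simp [bp]

lemma run_succ {s j : ℕ} (h : s + j < n) :
    run n s (j + 1) = (⟨s + j, h⟩ : Fin n) :: run n s j := by
  simp [run, dif_pos h]

lemma run_length {s j : ℕ} (h : s + j ≤ n) : (run n s j).length = j := by
  induction j with
  | zero => rfl
  | succ j ih =>
    rw [run_succ (by omega)]
    simp [ih (by omega)]

lemma swVal (i : Fin n) (x : Fin (n + 1)) :
    ((Equiv.swap (Fin.castSucc i) (Fin.succ i)) x : ℕ) =
      if (x : ℕ) = (i : ℕ) then (i : ℕ) + 1
      else if (x : ℕ) = (i : ℕ) + 1 then (i : ℕ) else (x : ℕ) := by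
  rcases eq_or_ne x (Fin.castSucc i) with h | h
  · subst h; simp
  · rcases eq_or_ne x (Fin.succ i) with h2 | h2
    · subst h2
      simp [Equiv.swap_apply_right]
    · rw [Equiv.swap_apply_of_ne_of_ne h h2]
      rw [if_neg, if_neg]
      · intro hc; exact h2 (Fin.ext (by simpa using hc))
      · intro hc; exact h (Fin.ext (by simpa using hc))

lemma runVal {s j : ℕ} (h : s + j ≤ n) (x : Fin (n + 1)) :
    ((wp (run n s j)) x : ℕ) =
      if (x : ℕ) = s then s + j
      else if s < (x : ℕ) ∧ (x : ℕ) ≤ s + j then (x : ℕ) - 1 else (x : ℕ) := by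
  induction j with
  | zero =>
    simp only [run, wp_nil, Equiv.Perm.one_apply]
    split_ifs <;> omega
  | succ j ih =>
    rw [run_succ (by omega), wp_cons, Equiv.Perm.mul_apply,
      swVal ⟨s + j, by omega⟩ (wp (run n s j) x), ih (by omega)]
    have hx : (x : ℕ) ≤ n := by omega
    simp only [Fin.val_mk]
    split_ifs <;> omega


variable {n : ℕ}

def invs (π : Equiv.Perm (Fin (n + 1))) : Finset (Fin (n + 1) × Fin (n + 1)) :=
  Finset.univ.filter fun p => p.1 < p.2 ∧ π p.2 < π p.1

def invN (π : Equiv.Perm (Fin (n + 1))) : ℕ := (invs π).card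

lemma mem_invs {π : Equiv.Perm (Fin (n + 1))} {p : Fin (n + 1) × Fin (n + 1)} :
    p ∈ invs π ↔ p.1 < p.2 ∧ π p.2 < π p.1 := by
  simp [invs]

lemma invN_one : invN (1 : Equiv.Perm (Fin (n + 1))) = 0 := by
  rw [invN, Finset.card_eq_zero, Finset.eq_empty_iff_forall_notMem]
  intro p hp
  rw [mem_invs] at hp
  simp only [Equiv.Perm.one_apply] at hp
  exact absurd hp.2 (not_lt.2 hp.1.le)

lemma swap_lt_iff (i : Fin n) {u v : Fin (n + 1)}
    (h : ¬((u : ℕ) = (i : ℕ) ∧ (v : ℕ) = (i : ℕ) + 1))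
    (h2 : ¬((v : ℕ) = (i : ℕ) ∧ (u : ℕ) = (i : ℕ) + 1)) :
    Equiv.swap (Fin.castSucc i) (Fin.succ i) u < Equiv.swap (Fin.castSucc i) (Fin.succ i) v
      ↔ u < v := by
  rw [Fin.lt_def, Fin.lt_def, swVal, swVal]
  split_ifs <;> omega

lemma invN_swap_mul (i : Fin n) (π : Equiv.Perm (Fin (n + 1)))
    (hord : π⁻¹ (Fin.castSucc i) < π⁻¹ (Fin.succ i)) :
    invN (Equiv.swap (Fin.castSucc i) (Fin.succ i) * π) = invN π + 1 := by
  have hpair : (π⁻¹ (Fin.castSucc i), π⁻¹ (Fin.succ i)) ∉ invs π := by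
    rw [mem_invs]
    simp only [Equiv.Perm.coe_inv, Equiv.apply_symm_apply]
    intro hc
    exact absurd hc.2 (not_lt.2 ((Fin.castSucc_lt_succ (i := i))).le)
  have hset : invs (Equiv.swap (Fin.castSucc i) (Fin.succ i) * π) =
      insert (π⁻¹ (Fin.castSucc i), π⁻¹ (Fin.succ i)) (invs π) := by
    ext p
    obtain ⟨x, y⟩ := p
    rw [mem_invs, Finset.mem_insert, mem_invs]
    simp only [Equiv.Perm.mul_apply, Prod.mk.injEq]
    constructor
    · rintro ⟨hxy, hlt⟩
      by_cases hp : x = π⁻¹ (Fin.castSucc i) ∧ y = π⁻¹ (Fin.succ i)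
      · exact Or.inl hp
      · refine Or.inr ⟨hxy, ?_⟩
        rw [swap_lt_iff i ?_ ?_] at hlt
        · exact hlt
        · rintro ⟨hy, hx⟩
          have hy' : y = π⁻¹ (Fin.castSucc i) := by
            rw [Equiv.Perm.eq_inv_iff_eq]; exact Fin.ext (by simpa using hy)
          have hx' : x = π⁻¹ (Fin.succ i) := by
            rw [Equiv.Perm.eq_inv_iff_eq]; exact Fin.ext (by simpa using hx)
          rw [hy', hx'] at hxy
          exact absurd hord (not_lt.2 hxy.le)
        · rintro ⟨hx, hy⟩
          have hy' : y = π⁻¹ (Fin.succ i) := by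
            rw [Equiv.Perm.eq_inv_iff_eq]; exact Fin.ext (by simpa using hy)
          have hx' : x = π⁻¹ (Fin.castSucc i) := by
            rw [Equiv.Perm.eq_inv_iff_eq]; exact Fin.ext (by simpa using hx)
          exact hp ⟨hx', hy'⟩
    · rintro (⟨hx, hy⟩ | ⟨hxy, hlt⟩)
      · subst hx; subst hy
        refine ⟨hord, ?_⟩
        simp only [Equiv.Perm.coe_inv, Equiv.apply_symm_apply, Equiv.swap_apply_left, Equiv.swap_apply_right]
        exact (Fin.castSucc_lt_succ (i := i))
      · refine ⟨hxy, ?_⟩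
        rw [swap_lt_iff i ?_ ?_]
        · exact hlt
        · rintro ⟨hy, hx⟩
          have hy' : y = π⁻¹ (Fin.castSucc i) := by
            rw [Equiv.Perm.eq_inv_iff_eq]; exact Fin.ext (by simpa using hy)
          have hx' : x = π⁻¹ (Fin.succ i) := by
            rw [Equiv.Perm.eq_inv_iff_eq]; exact Fin.ext (by simpa using hx)
          rw [hx', hy'] at hxy
          exact absurd hord (not_lt.2 hxy.le)
        · rintro ⟨hx, hy⟩
          have : (π y : ℕ) < (π x : ℕ) := Fin.lt_def.1 hlt
          omega
  rw [invN, invN, hset, Finset.card_insert_of_notMem hpair]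

lemma invN_swap_mul_le (i : Fin n) (π : Equiv.Perm (Fin (n + 1))) :
    invN (Equiv.swap (Fin.castSucc i) (Fin.succ i) * π) ≤ invN π + 1 := by
  rcases lt_or_ge (π⁻¹ (Fin.castSucc i)) (π⁻¹ (Fin.succ i)) with h | h
  · exact le_of_eq (invN_swap_mul i π h)
  have hne : π⁻¹ (Fin.succ i) ≠ π⁻¹ (Fin.castSucc i) := fun hc => by
    have := π⁻¹.injective hc
    exact absurd this (Fin.ne_of_lt ((Fin.castSucc_lt_succ (i := i)))).symm
  have h' : π⁻¹ (Fin.succ i) < π⁻¹ (Fin.castSucc i) := lt_of_le_of_ne h hne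
  set τ := Equiv.swap (Fin.castSucc i) (Fin.succ i) * π with hτ
  have hcomp : π = Equiv.swap (Fin.castSucc i) (Fin.succ i) * τ := by
    rw [hτ, ← mul_assoc, Equiv.swap_mul_self, one_mul]
  have hordτ : τ⁻¹ (Fin.castSucc i) < τ⁻¹ (Fin.succ i) := by
    rw [hτ]
    simp only [mul_inv_rev, Equiv.Perm.mul_apply]
    rw [Equiv.swap_inv, Equiv.swap_apply_left, Equiv.swap_apply_right]
    exact h'
  have := invN_swap_mul i τ hordτ
  rw [← hcomp] at this
  omega

lemma invN_wp_le (l : List (Fin n)) : invN (wp l) ≤ l.length := by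
  induction l with
  | nil => rw [wp_nil, invN_one]; simp
  | cons i l ih =>
    rw [wp_cons]
    calc invN _ ≤ invN (wp l) + 1 := invN_swap_mul_le i (wp l)
    _ ≤ l.length + 1 := by omega
    _ = (i :: l).length := by simp


variable {n : ℕ}

lemma run_fix {s j : ℕ} (h : s + j ≤ n) {x : Fin (n + 1)} (hx : (x : ℕ) < s) :
    wp (run n s j) x = x := by
  refine Fin.ext ?_
  rw [runVal h, if_neg (by omega), if_neg (by omega)]

lemma run_top {s j : ℕ} (h : s + j ≤ n) {x : Fin (n + 1)} (hx : s + j < (x : ℕ)) :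
    wp (run n s j) x = x := by
  refine Fin.ext ?_
  rw [runVal h, if_neg (by omega), if_neg (by omega)]

lemma run_s {s j : ℕ} (h : s + j ≤ n) :
    wp (run n s j) ⟨s, by omega⟩ = ⟨s + j, by omega⟩ := by
  refine Fin.ext ?_
  rw [runVal h, if_pos rfl]

lemma invN_run_mul {s : ℕ} (π' : Equiv.Perm (Fin (n + 1)))
    (hπ' : ∀ x : Fin (n + 1), (x : ℕ) < s + 1 → π' x = x) :
    ∀ j, s + j ≤ n → invN (wp (run n s j) * π') = j + invN π' := by
  intro j
  induction j with
  | zero => intro _; simp only [run, wp_nil, one_mul, Nat.zero_add]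
  | succ j ih =>
    intro hj
    have hj' : s + j ≤ n := by omega
    have hjn : s + j < n := by omega
    set i : Fin n := ⟨s + j, hjn⟩ with hi
    set τ : Equiv.Perm (Fin (n + 1)) := wp (run n s j) * π' with hτdef
    have hrw : wp (run n s (j + 1)) * π' =
        Equiv.swap (Fin.castSucc i) (Fin.succ i) * τ := by
      rw [run_succ hjn, wp_cons, mul_assoc]
    have hτs : τ ⟨s, by omega⟩ = Fin.castSucc i := by
      rw [hτdef, Equiv.Perm.mul_apply, hπ' ⟨s, by omega⟩ (by simp)]
      refine Fin.ext ?_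
      rw [runVal hj']
      simp [hi]
    have hb : s + j + 1 < n + 1 := by omega
    set y : Fin (n + 1) := (π'⁻¹) ⟨s + j + 1, hb⟩ with hydef
    have hy : π' y = ⟨s + j + 1, hb⟩ := Equiv.apply_symm_apply π' _
    have hτy : τ y = Fin.succ i := by
      rw [hτdef, Equiv.Perm.mul_apply, hy]
      refine Fin.ext ?_
      rw [runVal hj', if_neg (by simp only [Fin.val_mk]; omega),
        if_neg (by simp only [Fin.val_mk]; omega)]
      simp [hi]
    have hys : s < (y : ℕ) := by
      by_contra hc
      push_neg at hc
      have h1 : π' y = y := hπ' y (by omega)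
      rw [hy] at h1
      have h2 : s + j + 1 = (y : ℕ) := congrArg Fin.val h1
      omega
    have hord : τ⁻¹ (Fin.castSucc i) < τ⁻¹ (Fin.succ i) := by
      have h1 : τ⁻¹ (Fin.castSucc i) = ⟨s, by omega⟩ := by
        rw [← hτs, Equiv.Perm.coe_inv, Equiv.symm_apply_apply]
      have h2 : τ⁻¹ (Fin.succ i) = y := by
        rw [← hτy, Equiv.Perm.coe_inv, Equiv.symm_apply_apply]
      rw [h1, h2, Fin.lt_def]
      exact hys
    rw [hrw, invN_swap_mul i τ hord, ih hj']
    omega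

def Fset (n s : ℕ) : Finset (Equiv.Perm (Fin (n + 1))) :=
  Finset.univ.filter fun π => ∀ x : Fin (n + 1), (x : ℕ) < s → π x = x

lemma mem_Fset {s : ℕ} {π : Equiv.Perm (Fin (n + 1))} :
    π ∈ Fset n s ↔ ∀ x : Fin (n + 1), (x : ℕ) < s → π x = x := by
  simp [Fset]

lemma Fset_zero : Fset n 0 = Finset.univ := by
  ext π
  simp [mem_Fset]

lemma Fset_top : Fset n n = {1} := by
  ext π
  rw [mem_Fset, Finset.mem_singleton]
  constructor
  · intro hπ
    refine Equiv.ext fun x => ?_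
    rcases lt_or_ge ((x : ℕ)) n with hx | hx
    · simpa using hπ x hx
    · have hxn : (x : ℕ) = n := by omega
      rcases lt_or_ge ((π x : ℕ)) n with hy | hy
      · have := hπ (π x) hy
        have := π.injective this
        rw [this] at hy
        omega
      · have : (π x : ℕ) = n := by omega
        simp only [Equiv.Perm.one_apply]
        exact Fin.ext (by omega)
  · rintro rfl x _
    rfl

lemma pis_ge {s : ℕ} (hs : s < n + 1) {π : Equiv.Perm (Fin (n + 1))}
    (hπ : π ∈ Fset n s) : s ≤ ((π ⟨s, hs⟩ : Fin (n + 1)) : ℕ) := by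
  by_contra hc
  push_neg at hc
  have h1 := (mem_Fset.1 hπ) _ hc
  have := π.injective h1
  rw [this] at hc
  simp at hc

lemma comp_mem {s j : ℕ} (hj : s + j ≤ n) {π' : Equiv.Perm (Fin (n + 1))}
    (h' : π' ∈ Fset n (s + 1)) : wp (run n s j) * π' ∈ Fset n s := by
  rw [mem_Fset]
  intro x hx
  rw [Equiv.Perm.mul_apply, mem_Fset.1 h' x (by omega), run_fix hj hx]

lemma comp_val {s j : ℕ} (hj : s + j ≤ n) {π' : Equiv.Perm (Fin (n + 1))}
    (h' : π' ∈ Fset n (s + 1)) :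
    (wp (run n s j) * π') ⟨s, by omega⟩ = ⟨s + j, by omega⟩ := by
  rw [Equiv.Perm.mul_apply, mem_Fset.1 h' _ (by simp), run_s hj]

lemma decomp_mem {s j : ℕ} (hsn : s < n + 1) (hj : s + j ≤ n)
    {π : Equiv.Perm (Fin (n + 1))} (hπ : π ∈ Fset n s)
    (hπs : ((π ⟨s, hsn⟩ : Fin (n + 1)) : ℕ) = s + j) :
    (wp (run n s j))⁻¹ * π ∈ Fset n (s + 1) := by
  rw [mem_Fset]
  intro x hx
  rcases lt_or_ge ((x : ℕ)) s with hxs | hxs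
  · rw [Equiv.Perm.mul_apply, mem_Fset.1 hπ x hxs]
    have hfix := run_fix hj hxs (x := x)
    calc (wp (run n s j))⁻¹ x = (wp (run n s j))⁻¹ (wp (run n s j) x) := by rw [hfix]
    _ = x := Equiv.symm_apply_apply _ _
  · have hxs' : (x : ℕ) = s := by omega
    have hx' : x = ⟨s, hsn⟩ := Fin.ext hxs'
    rw [hx', Equiv.Perm.mul_apply]
    have hπs' : π ⟨s, hsn⟩ = ⟨s + j, by omega⟩ := Fin.ext hπs
    rw [hπs', ← run_s hj, Equiv.Perm.coe_inv, Equiv.symm_apply_apply]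


variable {n : ℕ}

lemma exists_word : ∀ k s, s + k = n → ∀ π ∈ Fset n s,
    ∃ l : List (Fin n), wp l = π ∧ l.length = invN π := by
  intro k
  induction k with
  | zero =>
    intro s hs π hπ
    have hs' : s = n := by omega
    subst hs'
    rw [Fset_top, Finset.mem_singleton] at hπ
    subst hπ
    exact ⟨[], wp_nil, by rw [invN_one]; rfl⟩
  | succ k ih =>
    intro s hs π hπ
    have hsn : s < n + 1 := by omega
    have hge := pis_ge hsn hπ
    have hlt := (π ⟨s, hsn⟩).isLt
    set j := ((π ⟨s, hsn⟩ : Fin (n + 1)) : ℕ) - s with hjdef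
    have hj : s + j ≤ n := by omega
    have hmem' : (wp (run n s j))⁻¹ * π ∈ Fset n (s + 1) :=
      decomp_mem hsn hj hπ (by omega)
    obtain ⟨l', hl1, hl2⟩ := ih (s + 1) (by omega) _ hmem'
    refine ⟨run n s j ++ l', ?_, ?_⟩
    · rw [wp_append, hl1, mul_inv_cancel_left]
    · rw [List.length_append, run_length hj, hl2]
      have hfix := mem_Fset.1 hmem'
      have h5 := invN_run_mul _ hfix j hj
      rw [mul_inv_cancel_left] at h5
      omega

lemma bp_nil : bp ([] : List (Fin n)) = 1 := rfl

lemma bp_cons (i : Fin n) (l : List (Fin n)) :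
    bp (i :: l) = (PresentedGroup.of i : BraidGroup (n + 1)) * bp l := by
  simp only [bp, List.map_cons, List.prod_cons]

lemma sig_eq {a : ℕ} (h : a < n) :
    sig (n + 1) (a + 1) = (PresentedGroup.of (⟨a, h⟩ : Fin n) : BraidGroup (n + 1)) := by
  have h' : a + 1 - 1 < n + 1 - 1 := by simpa using h
  simp only [sig]
  rw [dif_pos h']
  exact congrArg _ (Fin.ext (by simp))

lemma bp_run {s j : ℕ} (hj : s + j ≤ n) :
    bp (run n s j) = sigChain (n + 1) (s + 1) j := by
  induction j with
  | zero => rfl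
  | succ j ih =>
    have hjn : s + j < n := by omega
    rw [run_succ hjn, bp_cons, ih (by omega)]
    have e1 : s + 1 + j = (s + j) + 1 := by omega
    conv_rhs => rw [sigChain, e1, sig_eq hjn]

end Braid18

open Braid18

/-- The braided symmetriser equals the sum over the Matsumoto
section: `Σ_{π ∈ 𝕊_n} t(π) = [n]!_σ` in `ℂ𝔹_n`, where `t(π) = σ_{i_1} ⋯ σ_{i_l}`
for any reduced decomposition `π = s_{i_1} ⋯ s_{i_l}` of `π` into the Coxeter
generators `s_i = (i, i+1)` of `𝕊_n`. -/
theorem braided_symmetriser_eq_sum_matsumoto (n : ℕ)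
    (t : Equiv.Perm (Fin (n + 1)) → BraidGroup (n + 1))
    (ht : ∀ (π : Equiv.Perm (Fin (n + 1))) (l : List (Fin n)),
      (l.map fun i => Equiv.swap (Fin.castSucc i) (Fin.succ i)).prod = π →
      (∀ l' : List (Fin n),
        (l'.map fun i => Equiv.swap (Fin.castSucc i) (Fin.succ i)).prod = π →
        l.length ≤ l'.length) →
      t π = (l.map fun i => (PresentedGroup.of i : BraidGroup (n + 1))).prod) :
    ∑ π : Equiv.Perm (Fin (n + 1)), MonoidAlgebra.of ℂ (BraidGroup (n + 1)) (t π) =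
      bfact (n + 1) 1 (n + 1) := by
  classical
  have ht' : ∀ (π : Equiv.Perm (Fin (n + 1))) (l : List (Fin n)),
      wp l = π → l.length = invN π → t π = bp l := by
    intro π l h1 h2
    refine ht π l h1 ?_
    intro l' hl'
    rw [h2]
    have h3 : wp l' = π := hl'
    calc invN π = invN (wp l') := by rw [h3]
    _ ≤ l'.length := invN_wp_le l'
  have key : ∀ k s, s + k = n →
      ∑ π ∈ Fset n s, MonoidAlgebra.of ℂ (BraidGroup (n + 1)) (t π) =
        bfact (n + 1) (s + 1) (k + 1) := by
    intro k
    induction k with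
    | zero =>
      intro s hs
      have hs' : s = n := by omega
      subst hs'
      rw [Fset_top, Finset.sum_singleton]
      have t1 : t 1 = 1 := by
        rw [ht' 1 [] wp_nil (by rw [invN_one]; rfl)]; rfl
      rw [t1, map_one]
      simp [bfact, bint, sigChain, MonoidAlgebra.one_def]
    | succ k ih =>
      intro s hs
      have hsn : s < n + 1 := by omega
      have hlhs : ∑ π ∈ Fset n s, MonoidAlgebra.of ℂ (BraidGroup (n + 1)) (t π)
          = ∑ p ∈ Finset.range (k + 1 + 1) ×ˢ Fset n (s + 1),
              MonoidAlgebra.of ℂ (BraidGroup (n + 1)) (t (wp (run n s p.1) * p.2)) := by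
        refine Finset.sum_nbij'
          (i := fun π => (((π ⟨s, hsn⟩ : Fin (n + 1)) : ℕ) - s,
            (wp (run n s (((π ⟨s, hsn⟩ : Fin (n + 1)) : ℕ) - s)))⁻¹ * π))
          (j := fun p => wp (run n s p.1) * p.2)
          ?_ ?_ ?_ ?_ ?_
        · intro π hπ
          have hge := pis_ge hsn hπ
          have hlt := (π ⟨s, hsn⟩).isLt
          simp only [Finset.mem_product, Finset.mem_range]
          exact ⟨by omega, decomp_mem hsn (by omega) hπ (by omega)⟩
        · intro p hp
          rw [Finset.mem_product, Finset.mem_range] at hp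
          exact comp_mem (by omega) hp.2
        · intro π hπ
          simp only
          rw [mul_inv_cancel_left]
        · intro p hp
          obtain ⟨j0, π'⟩ := p
          rw [Finset.mem_product, Finset.mem_range] at hp
          simp only
          have hval : (((wp (run n s j0) * π') ⟨s, hsn⟩ : Fin (n + 1)) : ℕ) - s = j0 := by
            rw [comp_val (by omega) hp.2]
            simp
          rw [hval, inv_mul_cancel_left]
        · intro π hπ
          simp only
          rw [mul_inv_cancel_left]
      rw [hlhs, Finset.sum_product]
      have hpt : ∀ j0 ∈ Finset.range (k + 1 + 1), ∀ π' ∈ Fset n (s + 1),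
          t (wp (run n s j0) * π') = sigChain (n + 1) (s + 1) j0 * t π' := by
        intro j0 hj0 π' hπ'
        rw [Finset.mem_range] at hj0
        have hj : s + j0 ≤ n := by omega
        obtain ⟨l', hl1, hl2⟩ := exists_word k (s + 1) (by omega) π' hπ'
        have hfix := mem_Fset.1 hπ'
        have e1 : t π' = bp l' := ht' π' l' hl1 hl2
        have e2 : t (wp (run n s j0) * π') = bp (run n s j0 ++ l') := by
          refine ht' _ _ ?_ ?_
          · rw [wp_append, hl1]
          · rw [List.length_append, run_length hj, hl2, invN_run_mul π' hfix j0 hj]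
        rw [e2, bp_append, bp_run hj, e1]
      calc ∑ j0 ∈ Finset.range (k + 1 + 1), ∑ π' ∈ Fset n (s + 1),
              MonoidAlgebra.of ℂ (BraidGroup (n + 1)) (t (wp (run n s j0) * π'))
          = ∑ j0 ∈ Finset.range (k + 1 + 1), ∑ π' ∈ Fset n (s + 1),
              MonoidAlgebra.of ℂ (BraidGroup (n + 1)) (sigChain (n + 1) (s + 1) j0) *
                MonoidAlgebra.of ℂ (BraidGroup (n + 1)) (t π') := by
            refine Finset.sum_congr rfl fun j0 hj0 => Finset.sum_congr rfl fun π' hπ' => ?_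
            rw [hpt j0 hj0 π' hπ', map_mul]
        _ = (∑ j0 ∈ Finset.range (k + 1 + 1),
              MonoidAlgebra.of ℂ (BraidGroup (n + 1)) (sigChain (n + 1) (s + 1) j0)) *
            (∑ π' ∈ Fset n (s + 1), MonoidAlgebra.of ℂ (BraidGroup (n + 1)) (t π')) :=
            (Finset.sum_mul_sum _ _ _ _).symm
        _ = bint (n + 1) (s + 1) (k + 1 + 1) * bfact (n + 1) (s + 1 + 1) (k + 1) := by
            rw [ih (s + 1) (by omega)]; rfl
        _ = bfact (n + 1) (s + 1) (k + 1 + 1) := rfl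
  have h0 := key n 0 (by omega)
  rw [Fset_zero] at h0
  simpa using h0
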